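/- Let $k$ be a perfect field of characteristic $p > 0$, and let $V, W$ be finite-dimensional $k$-vector spaces equipped with $p$-linear endomorphisms $F_V: V \to V$ and $F_W: W \to W$. If the induced $p$-linear endomorphism $F_V \otimes F_W$ on $V \otimes_k W$ is bijective, then $F_V$ is bijective (provided $W \neq 0$). -/
import Mathlib


open TensorProduct

/-- Let `k` be a perfect field of characteristic `p > 0` and `V`, `W`
finite-dimensional `k`-vector spaces with `p`-linear endomorphisms `F_V`, `F_W`.
If the induced `p`-linear endomorphism `F_V ⊗ F_W` on `V ⊗ₖ W` (determined by
`v ⊗ w ↦ F_V v ⊗ F_W w`) is bijective and `W ≠ 0`, then `F_V` is bijective. -/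
theorem bijective_of_tensor_bijective {k V W : Type*} [Field k] (p : ℕ)
    [Fact (Nat.Prime p)] [CharP k p] [PerfectRing k p]
    [AddCommGroup V] [Module k V] [AddCommGroup W] [Module k W]
    [FiniteDimensional k V] [FiniteDimensional k W] [Nontrivial W]
    (FV : V → V) (hVadd : ∀ x y : V, FV (x + y) = FV x + FV y)
    (hVsmul : ∀ (c : k) (x : V), FV (c • x) = c ^ p • FV x)
    (FW : W → W) (hWadd : ∀ x y : W, FW (x + y) = FW x + FW y)
    (hWsmul : ∀ (c : k) (x : W), FW (c • x) = c ^ p • FW x)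
    (G : V ⊗[k] W → V ⊗[k] W)
    (hGadd : ∀ x y : V ⊗[k] W, G (x + y) = G x + G y)
    (hGsmul : ∀ (c : k) (x : V ⊗[k] W), G (c • x) = c ^ p • G x)
    (hG : ∀ (v : V) (w : W), G (v ⊗ₜ[k] w) = FV v ⊗ₜ[k] FW w)
    (hbij : Function.Bijective G) :
    Function.Bijective FV := by
  -- bundle `FV` and `G` as additive monoid homs
  let Fh : V →+ V := AddMonoidHom.mk' FV hVadd
  let Gh : V ⊗[k] W →+ V ⊗[k] W := AddMonoidHom.mk' G hGadd
  have hF0 : FV 0 = 0 := Fh.map_zero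
  have hG0 : G 0 = 0 := Gh.map_zero
  -- injectivity
  have hinj : Function.Injective FV := by
    intro x y hxy
    by_contra hne
    have hv : x - y ≠ 0 := sub_ne_zero.mpr hne
    have hFv : FV (x - y) = 0 := by
      have : Fh (x - y) = Fh x - Fh y := Fh.map_sub x y
      simpa [Fh, hxy] using this
    obtain ⟨w, hw⟩ := exists_ne (0 : W)
    have h1 : G ((x - y) ⊗ₜ[k] w) = 0 := by
      rw [hG, hFv, TensorProduct.zero_tmul]
    have h0 : (x - y) ⊗ₜ[k] w = (0 : V ⊗[k] W) := hbij.1 (by rw [h1, hG0])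
    -- derive a contradiction: `(x-y) ⊗ w ≠ 0`
    obtain ⟨f, hf⟩ : ∃ f : Module.Dual k V, f (x - y) ≠ 0 := by
      by_contra hc
      push_neg at hc
      exact hv ((Module.forall_dual_apply_eq_zero_iff k _).mp hc)
    have := congrArg (fun z => (TensorProduct.lid k W) (LinearMap.rTensor W f z)) h0
    simp only [LinearMap.rTensor_tmul, TensorProduct.lid_tmul, map_zero] at this
    exact hw ((smul_eq_zero.mp this).resolve_left hf)
  constructor
  · exact hinj
  -- surjectivity via a basis
  · intro y
    let b := Module.finBasis k V
    have hsum : ∀ (d : Fin (Module.finrank k V) → k),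
        FV (∑ i, d i • b i) = ∑ i, (d i) ^ p • FV (b i) := by
      intro d
      rw [show FV (∑ i, d i • b i) = Fh (∑ i, d i • b i) from rfl, map_sum]
      exact Finset.sum_congr rfl fun i _ => hVsmul (d i) (b i)
    have hli : LinearIndependent k (fun i => FV (b i)) := by
      rw [Fintype.linearIndependent_iff]
      intro c hc i
      set d : Fin (Module.finrank k V) → k := fun i => (frobeniusEquiv k p).symm (c i)
      have hdp : ∀ i, (d i) ^ p = c i := fun i => frobeniusEquiv_symm_pow_p k p (c i)
      have : FV (∑ i, d i • b i) = 0 := by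
        rw [hsum d]
        simpa [hdp] using hc
      have hz : (∑ i, d i • b i) = 0 := hinj (by rw [this, hF0])
      have hd0 : d i = 0 :=
        Fintype.linearIndependent_iff.mp b.linearIndependent d hz i
      rw [← hdp i, hd0, zero_pow (Fact.out (p := p.Prime)).ne_zero]
    have hspan : Submodule.span k (Set.range fun i => FV (b i)) = ⊤ :=
      hli.span_eq_top_of_card_eq_finrank' (by simp)
    have hy : y ∈ Submodule.span k (Set.range fun i => FV (b i)) := by
      rw [hspan]; trivial
    obtain ⟨c, hc⟩ := Submodule.mem_span_range_iff_exists_fun k |>.mp hy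
    refine ⟨∑ i, ((frobeniusEquiv k p).symm (c i)) • b i, ?_⟩
    rw [hsum]
    simpa [frobeniusEquiv_symm_pow_p] using hc
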